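/- The conjunction of n conditional events is pointwise dominated by their quasi conjunction: with the recursive definition of 𝒞ₙ below, define QC : Ω → ℝ by QC(ω) := 1 if ω ∈ ⋃ᵢ Hᵢ and ω ∉ Hᵢ∖Eᵢ for every i; QC(ω) := 0 if ω ∈ Hᵢ∖Eᵢ for some i; and QC(ω) := ν for ω ∈ ⋂ᵢ Hᵢᶜ, where ν := P(⋂ᵢ(Hᵢᶜ ∪ Eᵢ) ∩ ⋃ᵢHᵢ)/P(⋃ᵢHᵢ). Then 𝒞ₙ(ω) ≤ QC(ω) for every ω ∈ Ω. -/

import Mathlib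

open MeasureTheory

open MeasureTheory

/-- The recursive system defining the conjunction `𝒞_S` of the conditional events
`Eᵢ|Hᵢ, i ∈ S`, together with its prevision `x_S`, for every nonempty `S ⊆ {1,…,n}`:
for `ω ∈ ⋃_{i∈S} Hᵢ` let `T(ω) := {i ∈ S : ω ∉ Hᵢ}`; then
`𝒞_S(ω) = 0` if `ω ∈ Hᵢ∖Eᵢ` for some `i ∈ S`;
`𝒞_S(ω) = 1` if `ω ∈ Eᵢ∩Hᵢ` for every `i ∈ S`;
`𝒞_S(ω) = x_{T(ω)}` if `ω ∈ Eᵢ∩Hᵢ` for every `i ∈ S∖T(ω)` and `∅ ≠ T(ω) ⊊ S`;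
`x_S = E[𝒞_S·1_{⋃_{i∈S}Hᵢ}]/P(⋃_{i∈S}Hᵢ)`; and `𝒞_S(ω) = x_S` for `ω ∈ ⋂_{i∈S} Hᵢᶜ`. -/
structure ConjunctionSystem {Ω : Type*} [MeasurableSpace Ω] (P : Measure Ω)
    {n : ℕ} (E H : Fin n → Set Ω) (C : Finset (Fin n) → Ω → ℝ)
    (x : Finset (Fin n) → ℝ) : Prop where
  eq_zero : ∀ S : Finset (Fin n), S.Nonempty → ∀ ω : Ω,
    (∃ i ∈ S, ω ∈ H i ∧ ω ∉ E i) → C S ω = 0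
  eq_one : ∀ S : Finset (Fin n), S.Nonempty → ∀ ω : Ω,
    (∀ i ∈ S, ω ∈ E i ∩ H i) → C S ω = 1
  eq_part : ∀ S : Finset (Fin n), S.Nonempty → ∀ ω : Ω, ∀ T : Finset (Fin n),
    T ⊆ S → T.Nonempty → T ≠ S → (∀ i ∈ S, (i ∈ T ↔ ω ∉ H i)) →
    (∀ i ∈ S, i ∉ T → ω ∈ E i ∩ H i) → C S ω = x T
  prevision : ∀ S : Finset (Fin n), S.Nonempty →
    x S = (∫ ω in ⋃ i ∈ S, H i, C S ω ∂P) / (P (⋃ i ∈ S, H i)).toReal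
  eq_off : ∀ S : Finset (Fin n), S.Nonempty → ∀ ω : Ω,
    (∀ i ∈ S, ω ∉ H i) → C S ω = x S

/-- The conjunction `𝒞ₙ = 𝒞_{{1,…,n}}` of `n` conditional events is
pointwise dominated by their quasi conjunction `QC`, the function equal to `1` on
`⋃ᵢHᵢ ∖ ⋃ᵢ(Hᵢ∖Eᵢ)`, to `0` on `⋃ᵢ(Hᵢ∖Eᵢ)`, and to
`ν := P(⋂ᵢ(Hᵢᶜ ∪ Eᵢ) ∩ ⋃ᵢHᵢ)/P(⋃ᵢHᵢ)` on `⋂ᵢHᵢᶜ`: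
for every `ω ∈ Ω`, `𝒞ₙ(ω) ≤ QC(ω)`. -/
theorem stmt16 {Ω : Type*} [MeasurableSpace Ω] (P : Measure Ω) [IsProbabilityMeasure P]
    (n : ℕ) (hn : 1 ≤ n) (E H : Fin n → Set Ω)
    (hE : ∀ i, MeasurableSet (E i)) (hH : ∀ i, MeasurableSet (H i))
    (hHpos : ∀ i, 0 < P (H i))
    (C : Finset (Fin n) → Ω → ℝ) (x : Finset (Fin n) → ℝ)
    (hsys : ConjunctionSystem P E H C x)
    (QC : Ω → ℝ)
    (hQC1 : ∀ ω : Ω, ω ∈ ⋃ i, H i → (∀ i, ω ∈ H i → ω ∈ E i) → QC ω = 1)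
    (hQC0 : ∀ ω : Ω, (∃ i, ω ∈ H i ∧ ω ∉ E i) → QC ω = 0)
    (hQCν : ∀ ω : Ω, (∀ i, ω ∉ H i) →
      QC ω = (P ((⋂ i, ((H i)ᶜ ∪ E i)) ∩ ⋃ i, H i)).toReal / (P (⋃ i, H i)).toReal) :
    ∀ ω : Ω, C Finset.univ ω ≤ QC ω := by

  classical
  haveI : Nonempty (Fin n) := ⟨⟨0, hn⟩⟩
  have huniv : (Finset.univ : Finset (Fin n)).Nonempty := Finset.univ_nonempty
  have hUmeas : ∀ S : Finset (Fin n), MeasurableSet (⋃ i ∈ S, H i) :=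
    fun S => S.measurableSet_biUnion fun i _ => hH i
  have hUpos : ∀ S : Finset (Fin n), S.Nonempty → 0 < (P (⋃ i ∈ S, H i)).toReal := by
    rintro S ⟨i, hi⟩
    have h1 : 0 < P (⋃ i ∈ S, H i) :=
      lt_of_lt_of_le (hHpos i) (measure_mono (Set.subset_biUnion_of_mem hi))
    exact ENNReal.toReal_pos h1.ne' (measure_lt_top _ _).ne
  -- value of C S on the union when no falsifying event occurs
  have key2 : ∀ S : Finset (Fin n), S.Nonempty → ∀ ω ∈ ⋃ i ∈ S, H i,
      (∀ i ∈ S, ω ∈ H i → ω ∈ E i) →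
      C S ω = 1 ∨ ∃ T, T ⊆ S ∧ T.Nonempty ∧ T ≠ S ∧ C S ω = x T := by
    intro S hS ω hω h2
    set T := S.filter (fun i => ω ∉ H i) with hTdef
    by_cases hTe : T = ∅
    · left
      refine hsys.eq_one S hS ω fun i hi => ?_
      have hHi : ω ∈ H i := by
        by_contra h
        have : i ∈ T := Finset.mem_filter.mpr ⟨hi, h⟩
        simp [hTe] at this
      exact ⟨h2 i hi hHi, hHi⟩
    · right
      obtain ⟨j, hjS, hjH⟩ : ∃ j ∈ S, ω ∈ H j := by simpa using hω
      have hTne : T ≠ S := fun h =>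
        (Finset.mem_filter.mp (by rw [h]; exact hjS : j ∈ T)).2 hjH
      refine ⟨T, Finset.filter_subset _ _, Finset.nonempty_of_ne_empty hTe, hTne, ?_⟩
      refine hsys.eq_part S hS ω T (Finset.filter_subset _ _)
        (Finset.nonempty_of_ne_empty hTe) hTne (fun i hi => ?_) (fun i hi hiT => ?_)
      · simp [hTdef, Finset.mem_filter, hi]
      · have hHi : ω ∈ H i := by
          by_contra h
          exact hiT (Finset.mem_filter.mpr ⟨hi, h⟩)
        exact ⟨h2 i hi hHi, hHi⟩
  -- pointwise bounds on the union, given bounds on previsions of proper subsets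
  have bounds : ∀ S : Finset (Fin n), S.Nonempty →
      (∀ T, T ⊆ S → T.Nonempty → T ≠ S → 0 ≤ x T ∧ x T ≤ 1) →
      ∀ ω ∈ ⋃ i ∈ S, H i, 0 ≤ C S ω ∧ C S ω ≤ 1 := by
    intro S hS hT ω hω
    by_cases h1 : ∃ i ∈ S, ω ∈ H i ∧ ω ∉ E i
    · rw [hsys.eq_zero S hS ω h1]; exact ⟨le_refl 0, zero_le_one⟩
    · push_neg at h1
      rcases key2 S hS ω hω h1 with h | ⟨T, hsub, hne, hns, hCeq⟩
      · rw [h]; exact ⟨zero_le_one, le_refl 1⟩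
      · rw [hCeq]; exact hT T hsub hne hns
  -- a measurable integrable function agreeing with C S on the union
  have construct : ∀ S : Finset (Fin n), S.Nonempty → ∃ g : Ω → ℝ, Integrable g P ∧
      ∀ ω ∈ ⋃ i ∈ S, H i, C S ω = g ω := by
    intro S hS
    set B : Finset (Fin n) → Set Ω := fun T =>
      (⋂ i ∈ S, ((H i)ᶜ ∪ E i)) ∩ ⋂ i ∈ S, (if i ∈ T then (H i)ᶜ else H i) with hBdef
    have hBmeas : ∀ T, MeasurableSet (B T) := by
      intro T
      refine (S.measurableSet_biInter fun i _ => ((hH i).compl.union (hE i))).inter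
        (S.measurableSet_biInter fun i _ => ?_)
      by_cases h : i ∈ T <;> simp [h, (hH i).compl, hH i]
    have hBmem : ∀ T ω, ω ∈ B T ↔
        ((∀ i ∈ S, ω ∈ H i → ω ∈ E i) ∧ ∀ i ∈ S, (i ∈ T ↔ ω ∉ H i)) := by
      intro T ω
      simp only [hBdef, Set.mem_inter_iff, Set.mem_iInter, Set.mem_union, Set.mem_compl_iff]
      constructor
      · rintro ⟨ha, hb⟩
        refine ⟨fun i hi hHi => (ha i hi).resolve_left (not_not_intro hHi), fun i hi => ?_⟩
        have hbi := hb i hi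
        constructor
        · intro hiT; simpa [hiT] using hbi
        · intro hω; by_contra hiT; simp only [hiT, if_false] at hbi; exact hω hbi
      · rintro ⟨ha, hb⟩
        refine ⟨fun i hi => ?_, fun i hi => ?_⟩
        · by_cases h : ω ∈ H i
          · exact Or.inr (ha i hi h)
          · exact Or.inl h
        · by_cases h : i ∈ T
          · simpa [h] using ((hb i hi).mp h)
          · have hHi : ω ∈ H i := by
              by_contra hω; exact h ((hb i hi).mpr hω)
            simpa [h] using hHi
    refine ⟨fun ω => ∑ T ∈ S.powerset,
        Set.indicator (B T) (fun _ => if T = ∅ then (1:ℝ) else x T) ω, ?_, ?_⟩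
    · exact integrable_finset_sum _ fun T _ => (integrable_const _).indicator (hBmeas T)
    · intro ω hω
      by_cases h1 : ∃ i ∈ S, ω ∈ H i ∧ ω ∉ E i
      · rw [hsys.eq_zero S hS ω h1]
        symm
        apply Finset.sum_eq_zero
        intro T _
        apply Set.indicator_of_notMem
        intro hmem
        obtain ⟨i, hi, hHi, hEi⟩ := h1
        exact hEi (((hBmem T ω).mp hmem).1 i hi hHi)
      · push_neg at h1
        set T0 := S.filter (fun i => ω ∉ H i) with hT0
        have hT0mem : T0 ∈ S.powerset := Finset.mem_powerset.mpr (Finset.filter_subset _ _)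
        have hωB : ω ∈ B T0 := (hBmem T0 ω).mpr
          ⟨h1, fun i hi => by simp [hT0, Finset.mem_filter, hi]⟩
        have huniq : ∀ T ∈ S.powerset, T ≠ T0 → ω ∉ B T := by
          intro T hT hne hmem
          apply hne
          have hsub := Finset.mem_powerset.mp hT
          ext i
          constructor
          · intro hiT
            exact Finset.mem_filter.mpr
              ⟨hsub hiT, (((hBmem T ω).mp hmem).2 i (hsub hiT)).mp hiT⟩
          · intro hiT0
            obtain ⟨hiS, hωH⟩ := Finset.mem_filter.mp hiT0
            exact (((hBmem T ω).mp hmem).2 i hiS).mpr hωH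
        have hsum : (∑ T ∈ S.powerset,
            Set.indicator (B T) (fun _ => if T = ∅ then (1:ℝ) else x T) ω)
            = if T0 = ∅ then (1:ℝ) else x T0 := by
          rw [Finset.sum_eq_single_of_mem T0 hT0mem
            (fun T hT hne => Set.indicator_of_notMem (huniq T hT hne) _)]
          exact Set.indicator_of_mem hωB _
        beta_reduce
        rw [hsum]
        by_cases hTe : T0 = ∅
        · simp only [hTe, if_true]
          refine hsys.eq_one S hS ω fun i hi => ?_
          have hHi : ω ∈ H i := by
            by_contra h
            have : i ∈ T0 := Finset.mem_filter.mpr ⟨hi, h⟩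
            simp [hTe] at this
          exact ⟨h1 i hi hHi, hHi⟩
        · simp only [hTe, if_false]
          obtain ⟨j, hjS, hjH⟩ : ∃ j ∈ S, ω ∈ H j := by simpa using hω
          have hTne : T0 ≠ S := fun h =>
            (Finset.mem_filter.mp (by rw [h]; exact hjS : j ∈ T0)).2 hjH
          refine hsys.eq_part S hS ω T0 (Finset.filter_subset _ _)
            (Finset.nonempty_of_ne_empty hTe) hTne (fun i hi => ?_) (fun i hi hiT => ?_)
          · simp [hT0, Finset.mem_filter, hi]
          · have hHi : ω ∈ H i := by
              by_contra h; exact hiT (Finset.mem_filter.mpr ⟨hi, h⟩)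
            exact ⟨h1 i hi hHi, hHi⟩
  -- previsions lie in [0,1]
  have xbound : ∀ k : ℕ, ∀ S : Finset (Fin n), S.card ≤ k → S.Nonempty →
      0 ≤ x S ∧ x S ≤ 1 := by
    intro k
    induction k with
    | zero =>
      intro S hcard hS
      have hSe : S = ∅ := Finset.card_eq_zero.mp (Nat.le_zero.mp hcard)
      subst hSe
      exact absurd hS (by simp)
    | succ k ih =>
      intro S hcard hS
      have hT : ∀ T, T ⊆ S → T.Nonempty → T ≠ S → 0 ≤ x T ∧ x T ≤ 1 := by
        intro T hsub hne hns
        have hlt : T.card < S.card := Finset.card_lt_card (hsub.ssubset_of_ne hns)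
        exact ih T (by omega) hne
      obtain ⟨g, hgint, hgeq⟩ := construct S hS
      have hb := bounds S hS hT
      have hI : (∫ ω in ⋃ i ∈ S, H i, C S ω ∂P) = ∫ ω in ⋃ i ∈ S, H i, g ω ∂P :=
        setIntegral_congr_fun (hUmeas S) (fun ω hω => hgeq ω hω)
      rw [hsys.prevision S hS, hI]
      constructor
      · apply div_nonneg _ ENNReal.toReal_nonneg
        apply setIntegral_nonneg (hUmeas S)
        intro ω hω
        rw [← hgeq ω hω]; exact (hb ω hω).1
      · rw [div_le_one (hUpos S hS)]
        calc (∫ ω in ⋃ i ∈ S, H i, g ω ∂P) ≤ ∫ _ω in ⋃ i ∈ S, H i, (1:ℝ) ∂P := by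
              apply setIntegral_mono_on hgint.integrableOn (integrable_const 1) (hUmeas S)
              intro ω hω
              rw [← hgeq ω hω]; exact (hb ω hω).2
          _ = (P (⋃ i ∈ S, H i)).toReal := by simp [Measure.real]
  -- conclusion
  intro ω
  have hTall : ∀ T, T ⊆ Finset.univ → T.Nonempty → T ≠ Finset.univ → 0 ≤ x T ∧ x T ≤ 1 :=
    fun T _ hne _ => xbound T.card T le_rfl hne
  by_cases h1 : ∃ i, ω ∈ H i ∧ ω ∉ E i
  · obtain ⟨i, hHi, hEi⟩ := h1
    rw [hsys.eq_zero Finset.univ huniv ω ⟨i, Finset.mem_univ i, hHi, hEi⟩,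
      hQC0 ω ⟨i, hHi, hEi⟩]
  · push_neg at h1
    by_cases h2 : ω ∈ ⋃ i, H i
    · have hω' : ω ∈ ⋃ i ∈ (Finset.univ : Finset (Fin n)), H i := by simpa using h2
      rw [hQC1 ω h2 h1]
      exact (bounds Finset.univ huniv hTall ω hω').2
    · have h2' : ∀ i, ω ∉ H i := by simpa using h2
      have hUeq : (⋃ i ∈ (Finset.univ : Finset (Fin n)), H i) = ⋃ i, H i := by simp
      have hUm : MeasurableSet (⋃ i, H i) := MeasurableSet.iUnion fun i => hH i
      set A : Set Ω := ⋂ i, ((H i)ᶜ ∪ E i) with hAdef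
      have hAmeas : MeasurableSet A := MeasurableSet.iInter fun i => (hH i).compl.union (hE i)
      obtain ⟨g, hgint, hgeq⟩ := construct Finset.univ huniv
      have hb := bounds Finset.univ huniv hTall
      have hden : 0 < (P (⋃ i, H i)).toReal := by
        have := hUpos Finset.univ huniv; rwa [hUeq] at this
      have hICg : (∫ ω' in ⋃ i, H i, C Finset.univ ω' ∂P) = ∫ ω' in ⋃ i, H i, g ω' ∂P :=
        setIntegral_congr_fun hUm (fun ω' hω' => hgeq ω' (by rw [hUeq]; exact hω'))
      have step1 : (∫ ω' in ⋃ i, H i, g ω' ∂P)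
          ≤ ∫ ω' in ⋃ i, H i, A.indicator (fun _ => (1:ℝ)) ω' ∂P := by
        apply setIntegral_mono_on hgint.integrableOn
          ((integrable_const 1).indicator hAmeas).integrableOn hUm
        intro ω' hω'
        have hω'' : ω' ∈ ⋃ i ∈ (Finset.univ : Finset (Fin n)), H i := by
          rw [hUeq]; exact hω'
        rw [← hgeq ω' hω'']
        by_cases hc : ∃ i, ω' ∈ H i ∧ ω' ∉ E i
        · obtain ⟨i, hHi, hEi⟩ := hc
          rw [hsys.eq_zero Finset.univ huniv ω' ⟨i, Finset.mem_univ i, hHi, hEi⟩]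
          exact Set.indicator_nonneg (fun _ _ => zero_le_one) _
        · push_neg at hc
          have hωA : ω' ∈ A := Set.mem_iInter.mpr fun i => by
            by_cases h : ω' ∈ H i
            · exact Or.inr (hc i h)
            · exact Or.inl h
          rw [Set.indicator_of_mem hωA]
          exact (hb ω' hω'').2
      have step2 : (∫ ω' in ⋃ i, H i, A.indicator (fun _ => (1:ℝ)) ω' ∂P)
          = (P (A ∩ ⋃ i, H i)).toReal := by
        rw [setIntegral_indicator hAmeas]
        simp [Set.inter_comm, Measure.real]
      rw [hsys.eq_off Finset.univ huniv ω (fun i _ => h2' i), hQCν ω h2',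
        hsys.prevision Finset.univ huniv, hUeq, hICg]
      gcongr
      exact step1.trans (le_of_eq step2)
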